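/- arXiv:2306.13476 — 4 statements merged into one kernel-verified Lean document; each statement's English description precedes it below -/
import Mathlib

section
/- Suppose the constants η, k, ε, A_f, A_g > 0 satisfy k e^{-2πη} + ε A_g(1+k) ≤ k(1 - [((1 - e^{-2πη})/η)k + ε A_f(1+k)]) and ((1 - e^{-2πη})/η)k + ε A_f(1+k) < 1. Then for any φ Lipschitz with constant k, the function Γφ = R∘(id,φ)∘[Θ∘(id,φ)]^{-1} is well-defined and Lipschitz with constant at most k, where Θ(θ,ρ) = θ + 2πν + ((1 - e^{-2πη})/η)ρ + ε f(θ,ρ) and R(θ,ρ) = ρ e^{-2πη} + ε g(θ,ρ). -/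
open Real

set_option maxHeartbeats 1000000 in
/-- Well-definition of the graph transform: under the compatibility conditions on
`η, k, ε, A_f, A_g`, for any `k`-Lipschitz `φ` with values in `[-1,1]`, the map
`T = Θ∘(id,φ)` is a bijection of `ℝ` and `Γφ = R∘(id,φ)∘T⁻¹` is Lipschitz with constant
at most `k`, where `Θ(θ,ρ) = θ + 2πν + ((1-e^{-2πη})/η)ρ + ε f(θ,ρ)` and
`R(θ,ρ) = ρ e^{-2πη} + ε g(θ,ρ)`. -/
theorem graph_transform_well_defined
    (η ν ε k A_f A_g : ℝ) (hη : 0 < η) (hε : 0 ≤ ε) (hk : 0 < k)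
    (f g : ℝ → ℝ → ℝ)
    (hf : ∀ a b c d : ℝ, |f a b - f c d| ≤ A_f * max |a - c| |b - d|)
    (hg : ∀ a b c d : ℝ, |g a b - g c d| ≤ A_g * max |a - c| |b - d|)
    (hcond1 : k * exp (-(2*π*η)) + ε * A_g * (1 + k)
      ≤ k * (1 - (((1 - exp (-(2*π*η)))/η) * k + ε * A_f * (1 + k))))
    (hcond2 : ((1 - exp (-(2*π*η)))/η) * k + ε * A_f * (1 + k) < 1)
    (φ : ℝ → ℝ) (hφmem : ∀ θ, φ θ ∈ Set.Icc (-1:ℝ) 1)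
    (hφ : ∀ x y, |φ x - φ y| ≤ k * |x - y|)
    (T : ℝ → ℝ)
    (hT : ∀ θ, T θ = θ + 2*π*ν + ((1 - exp (-(2*π*η)))/η) * φ θ + ε * f θ (φ θ)) :
    Function.Bijective T ∧
    ∀ ψ : ℝ → ℝ, Function.LeftInverse ψ T → Function.RightInverse ψ T →
      ∀ x y : ℝ,
        |((φ (ψ x)) * exp (-(2*π*η)) + ε * g (ψ x) (φ (ψ x)))
          - ((φ (ψ y)) * exp (-(2*π*η)) + ε * g (ψ y) (φ (ψ y)))|
        ≤ k * |x - y| := by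
  have hπ := Real.pi_pos
  have hE0 : (0:ℝ) < exp (-(2*π*η)) := exp_pos _
  have hE1 : exp (-(2*π*η)) ≤ 1 := exp_le_one_iff.mpr (by nlinarith)
  set E := exp (-(2*π*η)) with hEdef
  set L := (1 - E)/η with hLdef
  have hL0 : 0 ≤ L := div_nonneg (by linarith) hη.le
  set α := L * k + ε * A_f * (1 + k) with hαdef
  have hA_f : 0 ≤ A_f := by
    have h := hf 1 0 0 0
    have h2 : |f 1 0 - f 0 0| ≤ A_f := by simpa using h
    exact le_trans (abs_nonneg _) h2
  have hA_g : 0 ≤ A_g := by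
    have h := hg 1 0 0 0
    have h2 : |g 1 0 - g 0 0| ≤ A_g := by simpa using h
    exact le_trans (abs_nonneg _) h2
  have hα0 : 0 ≤ α := by
    have := mul_nonneg hL0 hk.le
    have := mul_nonneg (mul_nonneg hε hA_f) (by linarith : (0:ℝ) ≤ 1 + k)
    unfold α; nlinarith
  have hα1 : α < 1 := hcond2
  have hmaxφ : ∀ x y : ℝ, max |x - y| |φ x - φ y| ≤ (1 + k) * |x - y| := by
    intro x y
    apply max_le
    · nlinarith [abs_nonneg (x - y)]
    · have := hφ x y
      nlinarith [abs_nonneg (x - y)]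
  have key : ∀ x y : ℝ, |T x - T y - (x - y)| ≤ α * |x - y| := by
    intro x y
    have heq : T x - T y - (x - y)
        = L * (φ x - φ y) + ε * (f x (φ x) - f y (φ y)) := by
      rw [hT x, hT y]; ring
    rw [heq]
    have habs := abs_add_le (L * (φ x - φ y)) (ε * (f x (φ x) - f y (φ y)))
    rw [abs_mul, abs_mul, abs_of_nonneg hL0, abs_of_nonneg hε] at habs
    have h3 : ε * |f x (φ x) - f y (φ y)| ≤ ε * (A_f * ((1 + k) * |x - y|)) := by
      refine mul_le_mul_of_nonneg_left ?_ hε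
      exact le_trans (hf x (φ x) y (φ y)) (mul_le_mul_of_nonneg_left (hmaxφ x y) hA_f)
    have h4 : L * |φ x - φ y| ≤ L * (k * |x - y|) :=
      mul_le_mul_of_nonneg_left (hφ x y) hL0
    unfold α; nlinarith
  have hlow : ∀ x y : ℝ, (1 - α) * |x - y| ≤ |T x - T y| := by
    intro x y
    have h1 : |x - y| ≤ |T x - T y| + |T x - T y - (x - y)| := by
      have := abs_sub (T x - T y) (T x - T y - (x - y))
      have heq : T x - T y - (T x - T y - (x - y)) = x - y := by ring
      rw [heq] at this
      exact this
    have := key x y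
    nlinarith
  have hinj : Function.Injective T := by
    intro x y hxy
    have h1 := hlow x y
    rw [hxy, sub_self, abs_zero] at h1
    have h2 : |x - y| = 0 := le_antisymm (by nlinarith [abs_nonneg (x - y)]) (abs_nonneg _)
    have := abs_eq_zero.mp h2
    linarith [sub_eq_zero.mp this]
  have hcont : Continuous T := by
    have hlip : ∀ x y : ℝ, dist (T x) (T y) ≤ (1 + α) * dist x y := by
      intro x y
      rw [Real.dist_eq, Real.dist_eq]
      have h1 := key x y
      have h2 : |T x - T y| ≤ |x - y| + |T x - T y - (x - y)| := by
        have := abs_add_le (x - y) (T x - T y - (x - y))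
        have heq : x - y + (T x - T y - (x - y)) = T x - T y := by ring
        rw [heq] at this
        exact this
      nlinarith
    exact (LipschitzWith.of_dist_le' hlip).continuous
  have hsurj : Function.Surjective T := by
    intro y
    set c := (y - T 0) / (1 - α) with hcdef
    have hc : (1 - α) * c = y - T 0 := by
      rw [hcdef, mul_comm]
      exact div_mul_cancel₀ _ (by linarith : (1:ℝ) - α ≠ 0)
    set a := min c 0 with hadef
    set b := max c 0 with hbdef
    have ha0 : a ≤ 0 := min_le_right _ _
    have hb0 : 0 ≤ b := le_max_right _ _
    have hac : a ≤ c := min_le_left _ _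
    have hcb : c ≤ b := le_max_left _ _
    have hka := key a 0
    rw [abs_le] at hka
    have haab : |a - 0| = -a := by rw [sub_zero, abs_of_nonpos ha0]
    rw [haab] at hka
    have hkb := key b 0
    rw [abs_le] at hkb
    have hbab : |b - 0| = b := by rw [sub_zero, abs_of_nonneg hb0]
    rw [hbab] at hkb
    have hTa : T a ≤ y := by
      have h1 : (1 - α) * a ≤ (1 - α) * c :=
        mul_le_mul_of_nonneg_left hac (by linarith)
      nlinarith [hka.2]
    have hTb : y ≤ T b := by
      have h1 : (1 - α) * c ≤ (1 - α) * b :=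
        mul_le_mul_of_nonneg_left hcb (by linarith)
      nlinarith [hkb.1]
    exact intermediate_value_univ a b hcont ⟨hTa, hTb⟩
  refine ⟨⟨hinj, hsurj⟩, ?_⟩
  intro ψ hLinv hRinv x y
  have hd : (1 - α) * |ψ x - ψ y| ≤ |x - y| := by
    have := hlow (ψ x) (ψ y)
    rw [hRinv x, hRinv y] at this
    exact this
  set u := ψ x
  set v := ψ y
  have heq : φ u * E + ε * g u (φ u) - (φ v * E + ε * g v (φ v))
      = (φ u - φ v) * E + ε * (g u (φ u) - g v (φ v)) := by ring
  rw [heq]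
  have habs := abs_add_le ((φ u - φ v) * E) (ε * (g u (φ u) - g v (φ v)))
  rw [abs_mul, abs_mul, abs_of_pos hE0, abs_of_nonneg hε] at habs
  have h5 : |φ u - φ v| * E ≤ k * |u - v| * E :=
    mul_le_mul_of_nonneg_right (hφ u v) hE0.le
  have h6 : ε * |g u (φ u) - g v (φ v)| ≤ ε * (A_g * ((1 + k) * |u - v|)) := by
    refine mul_le_mul_of_nonneg_left ?_ hε
    exact le_trans (hg u (φ u) v (φ v)) (mul_le_mul_of_nonneg_left (hmaxφ u v) hA_g)
  have h7 : (k * E + ε * A_g * (1 + k)) * |u - v| ≤ (k * (1 - α)) * |u - v| :=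
    mul_le_mul_of_nonneg_right hcond1 (abs_nonneg _)
  have h8 : k * ((1 - α) * |u - v|) ≤ k * |x - y| :=
    mul_le_mul_of_nonneg_left hd hk.le
  nlinarith
end

section
/- There exists c > 0 such that whenever 0 < η ≤ c, ε ≤ (π/(6A)) η k, and k ≤ η/6 (with A = A_f + A_g), the inequality k(1 - e^{-2πη} - [((1 - e^{-2πη})/η)k + ε A_f(1+k)]) ≥ ε A_g(1+k) holds; hence the graph transform Γ maps Lip_k to itself. -/
set_option maxHeartbeats 1600000
open Real

/-- There is `c > 0` such that whenever `0 < η ≤ c`, `ε ≤ (π/(6A)) η k` and `k ≤ η/6`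
(with `A = A_f + A_g`), the compatibility inequality
`k(1 - e^{-2πη} - [((1-e^{-2πη})/η)k + εA_f(1+k)]) ≥ εA_g(1+k)` holds; this is the
condition under which the graph transform maps `Lip_k` to itself. -/
theorem graph_transform_compatibility (A_f A_g : ℝ) (hAf : 0 < A_f) (hAg : 0 < A_g) :
    ∃ c > (0:ℝ), ∀ η k ε : ℝ, 0 < η → 0 < k → 0 < ε →
      η ≤ c → ε ≤ (π / (6 * (A_f + A_g))) * η * k → k ≤ η / 6 →
      ε * A_g * (1 + k)
        ≤ k * (1 - exp (-(2*π*η))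
            - (((1 - exp (-(2*π*η)))/η) * k + ε * A_f * (1 + k))) := by
  have hπ := Real.pi_pos
  refine ⟨1/(2*π), by positivity, ?_⟩
  intro η k ε hη hk hε hηc hεb hkη
  have hA : 0 < A_f + A_g := by linarith
  have hx : (0:ℝ) < 2*π*η := by positivity
  have h2πη : 2*π*η ≤ 1 := by
    rw [le_div_iff₀ (by positivity)] at hηc
    linarith [hηc]
  -- exp(-(2πη)) ≤ 1/(1+2πη)
  have hexp : exp (-(2*π*η)) ≤ 1/(1+2*π*η) := by
    rw [Real.exp_neg, inv_eq_one_div]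
    apply one_div_le_one_div_of_le (by linarith) (by linarith [Real.add_one_le_exp (2*π*η)])
  set u := 1 - exp (-(2*π*η)) with hu_def
  have hu : π*η ≤ u := by
    have h1 : 1 - 1/(1+2*π*η) = (2*π*η)/(1+2*π*η) := by field_simp; ring
    have h2 : (2*π*η)/(1+2*π*η) ≥ π*η := by
      rw [ge_iff_le, le_div_iff₀ (by linarith)]
      nlinarith
    have : 1 - 1/(1+2*π*η) ≤ u := by simp only [hu_def]; linarith
    linarith
  clear_value u
  have hupos : 0 < u := lt_of_lt_of_le (by positivity) hu
  have hk1 : k ≤ 1 := by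
    nlinarith [Real.pi_gt_three, mul_nonneg hη.le (sub_nonneg.mpr Real.pi_gt_three.le)]
  -- (u/η)*k ≤ u/6
  have hdiv : (u/η) * k ≤ u/6 := by
    rw [div_mul_eq_mul_div, div_le_div_iff₀ hη (by norm_num)]
    nlinarith
  -- ε ≤ π η k / (6 A)
  have hεb' : ε * (A_f + A_g) ≤ π * η * k / 6 := by
    rw [div_mul_eq_mul_div, div_mul_eq_mul_div, le_div_iff₀ (by positivity)] at hεb
    nlinarith
  have key : ε * A_g * (1 + k) + k * (ε * A_f * (1 + k)) ≤ (5/6) * (k * u) := by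
    have hg1 : ε * A_g * k ≤ ε * A_g := by
      nlinarith [mul_nonneg (mul_pos hε hAg).le (sub_nonneg.mpr hk1)]
    have hf1 : ε * A_f * k ≤ ε * A_f := by
      nlinarith [mul_nonneg (mul_pos hε hAf).le (sub_nonneg.mpr hk1)]
    have hf2 : ε * A_f * k * k ≤ ε * A_f * k := by
      nlinarith [mul_nonneg (mul_nonneg (mul_pos hε hAf).le hk.le) (sub_nonneg.mpr hk1)]
    have h1 : ε * A_g * (1 + k) + k * (ε * A_f * (1 + k)) ≤ 2 * (ε * (A_f + A_g)) := by
      nlinarith [hg1, hf1, hf2]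
    have h2 : 2 * (ε * (A_f + A_g)) ≤ π * η * k / 3 := by linarith
    have h3 : π * η * k / 3 ≤ (5/6) * (k * u) := by
      have := mul_le_mul_of_nonneg_left hu hk.le
      linarith [mul_pos hk hupos]
    linarith
  have hfin := mul_le_mul_of_nonneg_left hdiv hk.le
  linarith [hfin, key]
end

section
/- Let Q = (Θ, R) with Θ, R as in the graph transform setting, and assume the conditions of the well-definition proposition hold, so that in particular C := Lip R + k(2π + ε A_f) satisfies C = e^{-2πη} + ε A_g + 2πk + εk A_f < 1. Then for every φ Lipschitz with constant k taking values in [-1,1] and every (θ,ρ) ∈ ℝ × [-1,1], one has |R(θ,ρ) - Γφ(Θ(θ,ρ))| ≤ C·|ρ - φ(θ)|. -/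
open Real

/-- Key estimate for the contraction: with `Θ, R` as in the graph transform setting and
`C = e^{-2πη} + εA_g + k(2π + εA_f) < 1`, for every `k`-Lipschitz `φ` with values in
`[-1,1]` and every `(θ,ρ) ∈ ℝ × [-1,1]` one has
`|R(θ,ρ) - Γφ(Θ(θ,ρ))| ≤ C |ρ - φ(θ)|`, where `Γφ = R∘(id,φ)∘[Θ∘(id,φ)]⁻¹`. -/
theorem graph_transform_key_estimate
    (η ν ε k A_f A_g : ℝ) (hη : 0 < η) (hε : 0 ≤ ε) (hk : 0 < k)
    (f g : ℝ → ℝ → ℝ)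
    (hf : ∀ a b c d : ℝ, |f a b - f c d| ≤ A_f * max |a - c| |b - d|)
    (hg : ∀ a b c d : ℝ, |g a b - g c d| ≤ A_g * max |a - c| |b - d|)
    (Θ R : ℝ → ℝ → ℝ)
    (hΘ : ∀ θ ρ, Θ θ ρ = θ + 2*π*ν + ((1 - exp (-(2*π*η)))/η) * ρ + ε * f θ ρ)
    (hR : ∀ θ ρ, R θ ρ = ρ * exp (-(2*π*η)) + ε * g θ ρ)
    (hC : exp (-(2*π*η)) + ε * A_g + k * (2*π + ε * A_f) < 1)
    (φ : ℝ → ℝ) (hφmem : ∀ θ, φ θ ∈ Set.Icc (-1:ℝ) 1)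
    (hφ : ∀ x y, |φ x - φ y| ≤ k * |x - y|)
    (ψ : ℝ → ℝ)
    (hψ : Function.LeftInverse ψ (fun θ => Θ θ (φ θ)))
    (hψ' : Function.RightInverse ψ (fun θ => Θ θ (φ θ)))
    (Γφ : ℝ → ℝ) (hΓφ : ∀ x, Γφ x = R (ψ x) (φ (ψ x)))
    (hΓφLip : ∀ x y, |Γφ x - Γφ y| ≤ k * |x - y|) :
    ∀ θ ρ : ℝ, ρ ∈ Set.Icc (-1:ℝ) 1 →
      |R θ ρ - Γφ (Θ θ ρ)|
        ≤ (exp (-(2*π*η)) + ε * A_g + k * (2*π + ε * A_f)) * |ρ - φ θ| := by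
  intro θ ρ _
  set d := |ρ - φ θ| with hd
  have hd0 : 0 ≤ d := abs_nonneg _
  -- Γφ (Θ θ (φ θ)) = R θ (φ θ)
  have hfix : Γφ (Θ θ (φ θ)) = R θ (φ θ) := by
    rw [hΓφ]
    have : ψ (Θ θ (φ θ)) = θ := hψ θ
    rw [this]
  have hmax : ∀ x : ℝ, max |θ - θ| |ρ - φ θ| = d := by
    intro x
    simp [hd, max_eq_right (abs_nonneg (ρ - φ θ))]
  -- first term
  have h1 : |R θ ρ - R θ (φ θ)| ≤ (exp (-(2*π*η)) + ε * A_g) * d := by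
    rw [hR, hR]
    have e1 : ρ * exp (-(2*π*η)) + ε * g θ ρ - (φ θ * exp (-(2*π*η)) + ε * g θ (φ θ))
        = (ρ - φ θ) * exp (-(2*π*η)) + ε * (g θ ρ - g θ (φ θ)) := by ring
    rw [e1]
    calc |(ρ - φ θ) * exp (-(2*π*η)) + ε * (g θ ρ - g θ (φ θ))|
        ≤ |(ρ - φ θ) * exp (-(2*π*η))| + |ε * (g θ ρ - g θ (φ θ))| := abs_add_le _ _
      _ ≤ d * exp (-(2*π*η)) + ε * (A_g * d) := by
          gcongr ?_ + ?_
          · rw [abs_mul, abs_of_pos (exp_pos _)]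
          · rw [abs_mul, abs_of_nonneg hε]
            have := hg θ ρ θ (φ θ)
            rw [hmax 0] at this
            exact mul_le_mul_of_nonneg_left this hε
      _ = (exp (-(2*π*η)) + ε * A_g) * d := by ring
  -- second term
  have hΘdiff : |Θ θ (φ θ) - Θ θ ρ| ≤ (2*π + ε * A_f) * d := by
    rw [hΘ, hΘ]
    have e2 : θ + 2*π*ν + ((1 - exp (-(2*π*η)))/η) * (φ θ) + ε * f θ (φ θ)
        - (θ + 2*π*ν + ((1 - exp (-(2*π*η)))/η) * ρ + ε * f θ ρ)
        = ((1 - exp (-(2*π*η)))/η) * (φ θ - ρ) + ε * (f θ (φ θ) - f θ ρ) := by ring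
    rw [e2]
    have hco : 0 ≤ (1 - exp (-(2*π*η)))/η := by
      apply div_nonneg _ hη.le
      have : exp (-(2*π*η)) ≤ 1 := by
        apply exp_le_one_iff.mpr
        nlinarith [pi_pos]
      linarith
    have hco2 : (1 - exp (-(2*π*η)))/η ≤ 2*π := by
      rw [div_le_iff₀ hη]
      have := add_one_le_exp (-(2*π*η))
      linarith
    calc |((1 - exp (-(2*π*η)))/η) * (φ θ - ρ) + ε * (f θ (φ θ) - f θ ρ)|
        ≤ |((1 - exp (-(2*π*η)))/η) * (φ θ - ρ)| + |ε * (f θ (φ θ) - f θ ρ)| := abs_add_le _ _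
      _ ≤ (2*π) * d + ε * (A_f * d) := by
          gcongr ?_ + ?_
          · rw [abs_mul, abs_of_nonneg hco, abs_sub_comm]
            exact mul_le_mul_of_nonneg_right hco2 hd0
          · rw [abs_mul, abs_of_nonneg hε]
            have := hf θ (φ θ) θ ρ
            have hm : max |θ - θ| |φ θ - ρ| = d := by
              simp [hd, abs_sub_comm ρ (φ θ), max_eq_right (abs_nonneg (φ θ - ρ))]
            rw [hm] at this
            exact mul_le_mul_of_nonneg_left this hε
      _ = (2*π + ε * A_f) * d := by ring
  have h2 : |Γφ (Θ θ (φ θ)) - Γφ (Θ θ ρ)| ≤ k * ((2*π + ε * A_f) * d) :=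
    le_trans (hΓφLip _ _) (mul_le_mul_of_nonneg_left hΘdiff hk.le)
  calc |R θ ρ - Γφ (Θ θ ρ)|
      ≤ |R θ ρ - R θ (φ θ)| + |R θ (φ θ) - Γφ (Θ θ ρ)| := abs_sub_le _ _ _
    _ = |R θ ρ - R θ (φ θ)| + |Γφ (Θ θ (φ θ)) - Γφ (Θ θ ρ)| := by rw [hfix]
    _ ≤ (exp (-(2*π*η)) + ε * A_g) * d + k * ((2*π + ε * A_f) * d) := add_le_add h1 h2
    _ = (exp (-(2*π*η)) + ε * A_g + k * (2*π + ε * A_f)) * d := by ring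
end

section
/- Under the hypotheses of the key estimate |R(θ,ρ) - Γφ(Θ(θ,ρ))| ≤ C|ρ - φ(θ)| with C < 1, the graph transform Γ is a contraction on Lip_k with the C⁰ metric: for all φ₁, φ₂ ∈ Lip_k, ‖Γφ₁ - Γφ₂‖_∞ ≤ C·‖φ₁ - φ₂‖_∞. Consequently Γ has a unique fixed point φ* in Lip_k, and the graph of φ* is invariant under Q. -/
open Real BoundedContinuousFunction

/-- `Lip_k`: `2π`-periodic Lipschitz functions `ℝ → [-1,1]` with Lipschitz constant `≤ k`. -/
def LipSet (k : ℝ) : Set (ℝ → ℝ) :=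
  {φ | Function.Periodic φ (2*π) ∧ (∀ θ, φ θ ∈ Set.Icc (-1:ℝ) 1) ∧
    ∀ x y, |φ x - φ y| ≤ k * |x - y|}

/-- Bundle a function in `LipSet k` as a bounded continuous function. -/
noncomputable def lipBCF (k : ℝ) (hk : 0 ≤ k) (φ : ℝ → ℝ) (h : φ ∈ LipSet k) : ℝ →ᵇ ℝ :=
  BoundedContinuousFunction.mkOfBound
    ⟨φ, (LipschitzWith.of_dist_le_mul (K := ⟨k, hk⟩) fun x y => by
        rw [Real.dist_eq, Real.dist_eq]; exact h.2.2 x y).continuous⟩ 2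
    (fun x y => by
      have h1 := h.2.1 x; have h2 := h.2.1 y
      simp only [Set.mem_Icc] at h1 h2
      rw [Real.dist_eq]
      have : |φ x - φ y| ≤ |φ x| + |φ y| := abs_sub _ _
      have hx : |φ x| ≤ 1 := abs_le.2 h1
      have hy : |φ y| ≤ 1 := abs_le.2 h2
      simpa using this.trans (by linarith))

@[simp] theorem lipBCF_coe (k : ℝ) (hk : 0 ≤ k) (φ : ℝ → ℝ) (h : φ ∈ LipSet k) :
    (lipBCF k hk φ h : ℝ → ℝ) = φ := rfl

/-- Under the key estimate `|R(θ,ρ) - Γφ(Θ(θ,ρ))| ≤ C|ρ - φ(θ)|` with `C < 1`, the graph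
transform `Γ` is a `C`-contraction on `Lip_k` for the sup metric, and hence has a unique
fixed point `φ*` in `Lip_k`, whose graph is invariant under `Q = (Θ,R)`. -/
theorem graph_transform_contraction_fixed_point
    (k C : ℝ) (hk : 0 < k) (hC0 : 0 ≤ C) (hC : C < 1)
    (Θ R : ℝ → ℝ → ℝ)
    (Γ : (ℝ → ℝ) → (ℝ → ℝ))
    (hΓ : ∀ φ ∈ LipSet k, ∀ θ : ℝ, Γ φ (Θ θ (φ θ)) = R θ (φ θ))
    (hsurj : ∀ φ ∈ LipSet k, Function.Surjective (fun θ => Θ θ (φ θ)))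
    (hmaps : ∀ φ ∈ LipSet k, Γ φ ∈ LipSet k)
    (hkey : ∀ φ ∈ LipSet k, ∀ θ ρ : ℝ, ρ ∈ Set.Icc (-1:ℝ) 1 →
      |R θ ρ - Γ φ (Θ θ ρ)| ≤ C * |ρ - φ θ|) :
    (∀ φ₁ ∈ LipSet k, ∀ φ₂ ∈ LipSet k, ∀ B : ℝ,
      (∀ θ, |φ₁ θ - φ₂ θ| ≤ B) → ∀ x, |Γ φ₁ x - Γ φ₂ x| ≤ C * B) ∧
    (∃! φstar : ℝ → ℝ, φstar ∈ LipSet k ∧ Γ φstar = φstar ∧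
      ∀ θ : ℝ, R θ (φstar θ) = φstar (Θ θ (φstar θ))) := by
  -- Part 1: the contraction estimate
  have key : ∀ φ₁ ∈ LipSet k, ∀ φ₂ ∈ LipSet k, ∀ B : ℝ,
      (∀ θ, |φ₁ θ - φ₂ θ| ≤ B) → ∀ x, |Γ φ₁ x - Γ φ₂ x| ≤ C * B := by
    intro φ₁ h₁ φ₂ h₂ B hB x
    obtain ⟨θ, hθ⟩ := hsurj φ₂ h₂ x
    simp only at hθ
    have e2 : Γ φ₂ x = R θ (φ₂ θ) := by rw [← hθ, hΓ φ₂ h₂ θ]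
    have e1 : |R θ (φ₂ θ) - Γ φ₁ (Θ θ (φ₂ θ))| ≤ C * |φ₂ θ - φ₁ θ| :=
      hkey φ₁ h₁ θ (φ₂ θ) (h₂.2.1 θ)
    rw [hθ] at e1
    have hB' : |φ₂ θ - φ₁ θ| ≤ B := by rw [abs_sub_comm]; exact hB θ
    calc |Γ φ₁ x - Γ φ₂ x| = |R θ (φ₂ θ) - Γ φ₁ x| := by rw [e2, abs_sub_comm]
      _ ≤ C * |φ₂ θ - φ₁ θ| := e1
      _ ≤ C * B := by nlinarith [abs_nonneg (φ₂ θ - φ₁ θ)]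
  refine ⟨key, ?_⟩
  -- The subtype of bounded continuous functions lying in `LipSet k`
  set S : Set (ℝ →ᵇ ℝ) := {f | (f : ℝ → ℝ) ∈ LipSet k} with hSdef
  have hSclosed : IsClosed S := by
    have : S = (⋂ θ : ℝ, {f : ℝ →ᵇ ℝ | f (θ + 2*π) = f θ}) ∩
        ((⋂ θ : ℝ, {f : ℝ →ᵇ ℝ | f θ ∈ Set.Icc (-1:ℝ) 1}) ∩
          ⋂ x : ℝ, ⋂ y : ℝ, {f : ℝ →ᵇ ℝ | |f x - f y| ≤ k * |x - y|}) := by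
      ext f
      simp only [hSdef, Set.mem_setOf_eq, Set.mem_inter_iff, Set.mem_iInter, LipSet,
        Function.Periodic]
    rw [this]
    have heval : ∀ x : ℝ, Continuous fun f : ℝ →ᵇ ℝ => f x := fun x =>
      continuous_eval_const x
    refine IsClosed.inter ?_ (IsClosed.inter ?_ ?_)
    · exact isClosed_iInter fun θ => isClosed_eq (heval _) (heval _)
    · refine isClosed_iInter fun θ => ?_
      have : {f : ℝ →ᵇ ℝ | f θ ∈ Set.Icc (-1:ℝ) 1}
          = {f : ℝ →ᵇ ℝ | (-1:ℝ) ≤ f θ} ∩ {f : ℝ →ᵇ ℝ | f θ ≤ 1} := by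
        ext f; simp [Set.mem_Icc]
      rw [this]
      exact (isClosed_le continuous_const (heval θ)).inter
        (isClosed_le (heval θ) continuous_const)
    · exact isClosed_iInter fun x => isClosed_iInter fun y =>
        isClosed_le (((heval x).sub (heval y)).abs) continuous_const
  haveI : CompleteSpace S := hSclosed.completeSpace_coe
  have hzero : ((BoundedContinuousFunction.const ℝ (0:ℝ) : ℝ →ᵇ ℝ)) ∈ S := by
    refine ⟨fun θ => rfl, fun θ => by norm_num, fun x y => by simp; positivity⟩
  haveI : Nonempty S := ⟨⟨_, hzero⟩⟩
  -- the induced map on S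
  set G : S → S := fun f =>
    ⟨lipBCF k hk.le (Γ f.1) (hmaps f.1 f.2), hmaps f.1 f.2⟩ with hGdef
  have hGlip : LipschitzWith ⟨C, hC0⟩ G := by
    refine LipschitzWith.of_dist_le_mul fun f g => ?_
    have h0 : (0:ℝ) ≤ C * dist f g := mul_nonneg hC0 dist_nonneg
    show dist (G f).1 (G g).1 ≤ C * dist f g
    refine (BoundedContinuousFunction.dist_le h0).2 fun x => ?_
    have hdd : dist (f : S) g = dist f.1 g.1 := rfl
    have hB : ∀ θ : ℝ, |f.1 θ - g.1 θ| ≤ dist f.1 g.1 := fun θ => by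
      simpa [Real.dist_eq] using BoundedContinuousFunction.dist_coe_le_dist (f := f.1) (g := g.1) θ
    have := key f.1 f.2 g.1 g.2 (dist f.1 g.1) hB x
    exact (Real.dist_eq _ _).trans_le this
  have hcontr : ContractingWith ⟨C, hC0⟩ G := ⟨by exact_mod_cast hC, hGlip⟩
  set fp : S := ContractingWith.fixedPoint G hcontr with hfpdef
  have hfix : G fp = fp := hcontr.fixedPoint_isFixedPt
  set φs : ℝ → ℝ := (fp.1 : ℝ → ℝ) with hφs
  have hφmem : φs ∈ LipSet k := fp.2
  have hΓfix : Γ φs = φs := by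
    funext x
    have := congrArg (fun h : S => (h.1 : ℝ → ℝ) x) hfix
    exact this
  refine ⟨φs, ⟨hφmem, hΓfix, fun θ => ?_⟩, ?_⟩
  · rw [← hΓ φs hφmem θ, hΓfix]
  · rintro ψ ⟨hψmem, hψfix, -⟩
    set gψ : S := ⟨lipBCF k hk.le ψ hψmem, hψmem⟩ with hgψ
    have hfixψ : Function.IsFixedPt G gψ := by
      apply Subtype.ext
      apply BoundedContinuousFunction.ext
      intro x
      exact congrFun hψfix x
    have := hcontr.fixedPoint_unique hfixψ
    have := congrArg (fun h : S => (h.1 : ℝ → ℝ)) this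
    exact this
end
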